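/- In a Hadamard space, if P is contained in the closed ball of radius τ_P about x and in the closed ball of radius τ_Q + h about y, and τ_P is the circumradius of P with circumcenter x, then d(x,y)² ≤ 2τ_Q² − 2τ_P² + 4τ_Q h + 2h². -/
import Mathlib


open Metric Set

section Defs

variable {X : Type*} [MetricSpace X]

/-- `γ` is a unit-speed geodesic on the parameter set `s`. -/
def IsGeodesicOn (γ : ℝ → X) (s : Set ℝ) : Prop :=
  ∀ a ∈ s, ∀ b ∈ s, dist (γ a) (γ b) = |a - b|

/-- `γ` is a unit-speed geodesic segment from `x` to `y`, on `[0, dist x y]`. -/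
def IsGeodesicFromTo (γ : ℝ → X) (x y : X) : Prop :=
  γ 0 = x ∧ γ (dist x y) = y ∧ IsGeodesicOn γ (Set.Icc 0 (dist x y))

/-- A geodesic metric space: any two points are joined by a geodesic segment. -/
def GeodesicSpace (X : Type*) [MetricSpace X] : Prop :=
  ∀ x y : X, ∃ γ : ℝ → X, IsGeodesicFromTo γ x y

/-- A CAT(0) space: a geodesic space in which every geodesic triangle satisfies the
comparison inequality (distance from a vertex to a point on the opposite side is at most
the corresponding distance in a Euclidean comparison triangle). -/
def CAT0 (X : Type*) [MetricSpace X] : Prop :=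
  GeodesicSpace X ∧
    ∀ (x y : X) (γ : ℝ → X), IsGeodesicFromTo γ x y →
      ∀ t ∈ Set.Icc (0:ℝ) 1, ∀ p : X,
        dist p (γ (t * dist x y)) ^ 2 ≤
          (1 - t) * dist p x ^ 2 + t * dist p y ^ 2 - t * (1 - t) * dist x y ^ 2

/-- A Hadamard space: a complete CAT(0) geodesic space. -/
def Hadamard (X : Type*) [MetricSpace X] : Prop := CompleteSpace X ∧ CAT0 X

end Defs

section Circum

variable {X : Type*} [MetricSpace X]

/-- The circumradius of a subset: the infimum of radii of closed balls containing it. -/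
noncomputable def circumradius (Q : Set X) : ℝ :=
  sInf {r : ℝ | 0 ≤ r ∧ ∃ y : X, Q ⊆ Metric.closedBall y r}

/-- `c` is a circumcenter of `Q`: `Q` is contained in the closed ball of radius
`circumradius Q` about `c`. -/
def IsCircumcenter (Q : Set X) (c : X) : Prop :=
  Q ⊆ Metric.closedBall c (circumradius Q)

end Circum

/-- In a Hadamard space, if `P` is contained in the closed ball of radius `τP`
about `x` and in the closed ball of radius `τQ + h` about `y`, and `τP` is the circumradius
of `P` with circumcenter `x`, then `d(x,y)² ≤ 2τQ² − 2τP² + 4τQh + 2h²`. -/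
theorem circumcenter_displacement_bound {X : Type*} [MetricSpace X] (hX : Hadamard X)
    (P : Set X) (hPne : P.Nonempty) (x y : X) (τP τQ h : ℝ)
    (hτQ : 0 ≤ τQ) (hh : 0 ≤ h)
    (hPx : P ⊆ Metric.closedBall x τP)
    (hPy : P ⊆ Metric.closedBall y (τQ + h))
    (hτP : τP = circumradius P) (hcen : IsCircumcenter P x) :
    dist x y ^ 2 ≤ 2 * τQ ^ 2 - 2 * τP ^ 2 + 4 * τQ * h + 2 * h ^ 2 := by
  obtain ⟨p0, hp0⟩ := hPne
  have hτPnn : 0 ≤ τP := le_trans dist_nonneg (hPx hp0)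
  obtain ⟨_, hgeo, hcat⟩ := hX
  obtain ⟨γ, hγ⟩ := hgeo x y
  set m := γ ((1/2) * dist x y) with hm
  set v : ℝ := (1/2) * τP ^ 2 + (1/2) * (τQ + h) ^ 2 - (1/4) * dist x y ^ 2 with hv
  have key : ∀ p ∈ P, dist p m ^ 2 ≤ v := by
    intro p hp
    have h1 := hcat x y γ hγ (1/2) (by norm_num) p
    have h2 : dist p x ≤ τP := hPx hp
    have h3 : dist p y ≤ τQ + h := hPy hp
    have h2' : dist p x ^ 2 ≤ τP ^ 2 := by nlinarith [dist_nonneg (x := p) (y := x)]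
    have h3' : dist p y ^ 2 ≤ (τQ + h) ^ 2 := by nlinarith [dist_nonneg (x := p) (y := y)]
    rw [hm, hv]
    nlinarith [h1]
  have hvnn : 0 ≤ v := le_trans (sq_nonneg _) (key p0 hp0)
  set r := Real.sqrt v with hr
  have hr2 : r ^ 2 = v := Real.sq_sqrt hvnn
  have hball : P ⊆ Metric.closedBall m r := by
    intro p hp
    have hk := key p hp
    have hd : dist p m ≤ r := by
      rw [hr, ← Real.sqrt_sq (dist_nonneg (x := p) (y := m))]
      exact Real.sqrt_le_sqrt hk
    exact mem_closedBall.mpr hd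
  have hmem : r ∈ {r : ℝ | 0 ≤ r ∧ ∃ y : X, P ⊆ Metric.closedBall y r} :=
    ⟨Real.sqrt_nonneg v, m, hball⟩
  have hbdd : BddBelow {r : ℝ | 0 ≤ r ∧ ∃ y : X, P ⊆ Metric.closedBall y r} :=
    ⟨0, fun a ha => ha.1⟩
  have hle : τP ≤ r := by
    rw [hτP, circumradius]
    exact csInf_le hbdd hmem
  have hle2 : τP ^ 2 ≤ v := by
    rw [← hr2]
    exact pow_le_pow_left₀ hτPnn hle 2
  rw [hv] at hle2
  nlinarith [hle2]
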